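/- arXiv:2502.04788 — 6 statements merged into one kernel-verified Lean document; each statement's English description precedes it below -/
import Mathlib

section
/- Let T > 0, ι ≥ 0, Y ≥ 0, and c > 0, m₀ ≥ 0, M ≥ 0. Let (Δₙ)ₙ≥1 and (δₙ)ₙ≥0 be continuous functions on [0,T] such that |Δₙ(t)| ≤ (2c(T−t))ⁿ/n! · M for all n ≥ 1 and t, |δ₀(t)| ≤ m₀ for all t, and δ_{n+1}(t) = −∫ₜᵀ e^{ι(t−s)}( c·δₙ(s) − ιY·Δ_{n+1}(s) ) ds for all n ≥ 0 and t ∈ [0,T]. Then for every n ≥ 0 and t ∈ [0,T], |δₙ(t)| ≤ (c(T−t))ⁿ/n! · m₀ + (ιY/c)·(2c(T−t))^{n+1}/(n+1)! · M. In particular δₙ converges to zero uniformly on [0,T]. -/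
open MeasureTheory intervalIntegral

lemma integral_pow_sub_aux (k : ℕ) (a b : ℝ) :
    ∫ s in a..b, (b - s) ^ k = (b - a) ^ (k + 1) / (k + 1) := by
  rw [intervalIntegral.integral_comp_sub_left (fun x => x ^ k) b]
  simp [integral_pow]


set_option maxHeartbeats 1000000 in
/-- Second inductive estimate in the proof of Theorem 4.1(ii): the error `δₙ` in the
first-order coefficient satisfies
`|δₙ(t)| ≤ (c(T−t))ⁿ/n!·m₀ + (ιY/c)·(2c(T−t))^{n+1}/(n+1)!·M`,
hence converges to zero uniformly on `[0,T]`. -/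
theorem stmt_6 (T ι Y c m₀ M : ℝ) (hT : 0 < T) (hι : 0 ≤ ι) (hY : 0 ≤ Y)
    (hc : 0 < c) (hm₀ : 0 ≤ m₀) (hM : 0 ≤ M)
    (Δ δ : ℕ → ℝ → ℝ)
    (hΔcont : ∀ n, ContinuousOn (Δ n) (Set.Icc 0 T))
    (hδcont : ∀ n, ContinuousOn (δ n) (Set.Icc 0 T))
    (hΔ : ∀ n, 1 ≤ n → ∀ t ∈ Set.Icc (0 : ℝ) T,
      |Δ n t| ≤ (2 * c * (T - t)) ^ n / (n.factorial : ℝ) * M)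
    (hδ0 : ∀ t ∈ Set.Icc (0 : ℝ) T, |δ 0 t| ≤ m₀)
    (hrec : ∀ n, ∀ t ∈ Set.Icc (0 : ℝ) T,
      δ (n + 1) t =
        -∫ s in t..T, Real.exp (ι * (t - s)) * (c * δ n s - ι * Y * Δ (n + 1) s)) :
    (∀ n, ∀ t ∈ Set.Icc (0 : ℝ) T,
      |δ n t| ≤ (c * (T - t)) ^ n / (n.factorial : ℝ) * m₀ +
        (ι * Y / c) * ((2 * c * (T - t)) ^ (n + 1) / ((n + 1).factorial : ℝ)) * M) ∧
    TendstoUniformlyOn δ 0 Filter.atTop (Set.Icc 0 T) := by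
  have hιY : 0 ≤ ι * Y := mul_nonneg hι hY
  have main : ∀ n, ∀ t ∈ Set.Icc (0 : ℝ) T,
      |δ n t| ≤ (c * (T - t)) ^ n / (n.factorial : ℝ) * m₀ +
        (ι * Y / c) * ((2 * c * (T - t)) ^ (n + 1) / ((n + 1).factorial : ℝ)) * M := by
    intro n
    induction n with
    | zero =>
      intro t ht
      have hTt : 0 ≤ T - t := by linarith [ht.2]
      have h2 : 0 ≤ (ι * Y / c) * ((2 * c * (T - t)) ^ (0 + 1) / ((0 + 1).factorial : ℝ)) * M := by
        positivity
      have := hδ0 t ht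
      simpa using le_add_of_le_of_nonneg (by simpa using this) h2
    | succ n ih =>
      intro t ht
      have ht0 : (0 : ℝ) ≤ t := ht.1
      have htT : t ≤ T := ht.2
      have hsub : Set.Icc t T ⊆ Set.Icc (0 : ℝ) T := Set.Icc_subset_Icc ht0 le_rfl
      set f : ℝ → ℝ := fun s => Real.exp (ι * (t - s)) * (c * δ n s - ι * Y * Δ (n + 1) s) with hf
      set g : ℝ → ℝ := fun s => (c ^ (n + 1) * m₀ / (n.factorial : ℝ)) * (T - s) ^ n
          + (2 * ι * Y * (2 * c) ^ (n + 1) * M / ((n + 1).factorial : ℝ)) * (T - s) ^ (n + 1) with hg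
      have huIcc : Set.uIcc t T = Set.Icc t T := Set.uIcc_of_le htT
      have hfc : ContinuousOn f (Set.Icc t T) := by
        apply ContinuousOn.mul
        · exact (Real.continuous_exp.comp (continuous_const.mul
            (continuous_const.sub continuous_id))).continuousOn
        · exact ((continuousOn_const.mul ((hδcont n).mono hsub)).sub
            (continuousOn_const.mul ((hΔcont (n + 1)).mono hsub)))
      have hfint : IntervalIntegrable f volume t T :=
        (hfc.mono (by rw [huIcc])).intervalIntegrable
      have hgint : IntervalIntegrable g volume t T := by
        apply Continuous.intervalIntegrable
        continuity
      have hbound : ∀ s ∈ Set.Icc t T, |f s| ≤ g s := by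
        intro s hs
        have hs' : s ∈ Set.Icc (0 : ℝ) T := hsub hs
        have hTs : 0 ≤ T - s := by linarith [hs'.2]
        have hexp : Real.exp (ι * (t - s)) ≤ 1 :=
          Real.exp_le_one_iff.2 (mul_nonpos_of_nonneg_of_nonpos hι (by linarith [hs.1]))
        have h1 : |f s| ≤ |c * δ n s - ι * Y * Δ (n + 1) s| := by
          rw [hf, abs_mul, abs_of_pos (Real.exp_pos _)]
          exact mul_le_of_le_one_left (abs_nonneg _) hexp
        have h2 : |c * δ n s - ι * Y * Δ (n + 1) s| ≤ c * |δ n s| + ι * Y * |Δ (n + 1) s| := by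
          calc |c * δ n s - ι * Y * Δ (n + 1) s| ≤ |c * δ n s| + |ι * Y * Δ (n + 1) s| :=
                abs_sub _ _
            _ = c * |δ n s| + ι * Y * |Δ (n + 1) s| := by
                rw [abs_mul, abs_mul, abs_of_pos hc, abs_of_nonneg hιY]
        have hδb := ih s hs'
        have hΔb := hΔ (n + 1) (Nat.le_add_left 1 n) s hs'
        have h3 : c * |δ n s| + ι * Y * |Δ (n + 1) s| ≤
            c * ((c * (T - s)) ^ n / (n.factorial : ℝ) * m₀ +
              (ι * Y / c) * ((2 * c * (T - s)) ^ (n + 1) / ((n + 1).factorial : ℝ)) * M)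
            + ι * Y * ((2 * c * (T - s)) ^ (n + 1) / ((n + 1).factorial : ℝ) * M) :=
          add_le_add (mul_le_mul_of_nonneg_left hδb hc.le)
            (mul_le_mul_of_nonneg_left hΔb hιY)
        have h4 : c * ((c * (T - s)) ^ n / (n.factorial : ℝ) * m₀ +
              (ι * Y / c) * ((2 * c * (T - s)) ^ (n + 1) / ((n + 1).factorial : ℝ)) * M)
            + ι * Y * ((2 * c * (T - s)) ^ (n + 1) / ((n + 1).factorial : ℝ) * M) = g s := by
          rw [hg]
          have hfac : ((n.factorial : ℝ)) ≠ 0 := Nat.cast_ne_zero.2 n.factorial_ne_zero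
          have hfac1 : (((n + 1).factorial : ℝ)) ≠ 0 := Nat.cast_ne_zero.2 (n + 1).factorial_ne_zero
          simp only [mul_pow]
          field_simp
          ring
        exact h1.trans (h2.trans (h3.trans h4.le))
      have hkey : |δ (n + 1) t| ≤ ∫ s in t..T, g s := by
        rw [hrec n t ht, abs_neg]
        calc |∫ s in t..T, f s| ≤ ∫ s in t..T, |f s| := by
              simpa using intervalIntegral.norm_integral_le_integral_norm (f := f) htT
          _ ≤ ∫ s in t..T, g s :=
              intervalIntegral.integral_mono_on htT hfint.norm hgint (fun s hs => hbound s hs)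
      have hgval : ∫ s in t..T, g s =
          (c ^ (n + 1) * m₀ / (n.factorial : ℝ)) * ((T - t) ^ (n + 1) / (n + 1))
          + (2 * ι * Y * (2 * c) ^ (n + 1) * M / ((n + 1).factorial : ℝ)) *
              ((T - t) ^ (n + 2) / (n + 2)) := by
        have i1 : IntervalIntegrable
            (fun s : ℝ => (c ^ (n + 1) * m₀ / (n.factorial : ℝ)) * (T - s) ^ n) volume t T := by
          apply Continuous.intervalIntegrable
          exact continuous_const.mul ((continuous_const.sub continuous_id).pow n)
        have i2 : IntervalIntegrable
            (fun s : ℝ => (2 * ι * Y * (2 * c) ^ (n + 1) * M / ((n + 1).factorial : ℝ)) *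
              (T - s) ^ (n + 1)) volume t T := by
          apply Continuous.intervalIntegrable
          exact continuous_const.mul ((continuous_const.sub continuous_id).pow (n + 1))
        have e1 : (∫ s in t..T, g s) =
            (∫ s in t..T, (c ^ (n + 1) * m₀ / (n.factorial : ℝ)) * (T - s) ^ n)
            + ∫ s in t..T, (2 * ι * Y * (2 * c) ^ (n + 1) * M / ((n + 1).factorial : ℝ)) *
                (T - s) ^ (n + 1) := by
          rw [← intervalIntegral.integral_add i1 i2]
        rw [e1, intervalIntegral.integral_const_mul, intervalIntegral.integral_const_mul,
          integral_pow_sub_aux, integral_pow_sub_aux]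
        push_cast
        ring
      have heq : (c ^ (n + 1) * m₀ / (n.factorial : ℝ)) * ((T - t) ^ (n + 1) / (n + 1))
          + (2 * ι * Y * (2 * c) ^ (n + 1) * M / ((n + 1).factorial : ℝ)) *
              ((T - t) ^ (n + 2) / (n + 2)) =
          (c * (T - t)) ^ (n + 1) / ((n + 1).factorial : ℝ) * m₀ +
            (ι * Y / c) * ((2 * c * (T - t)) ^ (n + 1 + 1) / ((n + 1 + 1).factorial : ℝ)) * M := by
        have hfac : ((n.factorial : ℝ)) ≠ 0 := Nat.cast_ne_zero.2 n.factorial_ne_zero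
        have hfac1 : (((n + 1).factorial : ℝ)) ≠ 0 := Nat.cast_ne_zero.2 (n + 1).factorial_ne_zero
        rw [Nat.factorial_succ (n + 1), Nat.factorial_succ n]
        simp only [mul_pow]
        push_cast
        field_simp
        ring
      calc |δ (n + 1) t| ≤ ∫ s in t..T, g s := hkey
        _ = _ := by rw [hgval, heq]
  refine ⟨main, ?_⟩
  rw [Metric.tendstoUniformlyOn_iff]
  intro ε hε
  set b : ℕ → ℝ := fun n => (c * T) ^ n / (n.factorial : ℝ) * m₀ +
      (ι * Y / c) * ((2 * c * T) ^ (n + 1) / ((n + 1).factorial : ℝ)) * M with hb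
  have hb0 : Filter.Tendsto b Filter.atTop (nhds 0) := by
    have h1 : Filter.Tendsto (fun n : ℕ => (c * T) ^ n / (n.factorial : ℝ) * m₀)
        Filter.atTop (nhds (0 * m₀)) :=
      (FloorSemiring.tendsto_pow_div_factorial_atTop (c * T)).mul_const m₀
    have h2 : Filter.Tendsto (fun n : ℕ => (ι * Y / c) *
        ((2 * c * T) ^ (n + 1) / ((n + 1).factorial : ℝ)) * M) Filter.atTop (nhds ((ι * Y / c) * 0 * M)) := by
      apply Filter.Tendsto.mul_const M
      apply Filter.Tendsto.const_mul
      exact (FloorSemiring.tendsto_pow_div_factorial_atTop (2 * c * T)).comp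
        (Filter.tendsto_add_atTop_nat 1)
    simpa using h1.add h2
  have hbev : ∀ᶠ n in Filter.atTop, b n < ε := by
    have := hb0.eventually (eventually_lt_nhds hε)  -- maybe wrong name
    exact this
  filter_upwards [hbev] with n hn t ht
  have hTt : 0 ≤ T - t := by linarith [ht.2]
  have hle : |δ n t| ≤ b n := by
    refine (main n t ht).trans ?_
    rw [hb]
    have hp1 : (c * (T - t)) ^ n ≤ (c * T) ^ n :=
      pow_le_pow_left₀ (by positivity) (by nlinarith [ht.1]) n
    have hp2 : (2 * c * (T - t)) ^ (n + 1) ≤ (2 * c * T) ^ (n + 1) :=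
      pow_le_pow_left₀ (by positivity) (by nlinarith [ht.1]) (n + 1)
    have hf1 : (0:ℝ) < (n.factorial : ℝ) := by positivity
    have hf2 : (0:ℝ) < ((n + 1).factorial : ℝ) := by positivity
    apply add_le_add
    · exact mul_le_mul_of_nonneg_right ((div_le_div_iff_of_pos_right hf1).2 hp1) hm₀
    · exact mul_le_mul_of_nonneg_right
        (mul_le_mul_of_nonneg_left ((div_le_div_iff_of_pos_right hf2).2 hp2) (by positivity)) hM
  have hd : dist ((0 : ℝ → ℝ) t) (δ n t) = |δ n t| := by
    simp [Real.dist_eq]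
  rw [hd]
  exact lt_of_le_of_lt hle hn
end

section
/- Let T > 0, k₁, k₂ ∈ (0,1), ω ≥ 0, and let c₁, c₂, μ₁*, μ₂* : [0,T] → ℝ satisfy μ₁*(t) = k₁μ₂*(t) + c₁(t) and μ₂*(t) = k₂μ₁*(t) + c₂(t) for all t. Suppose (μ₁ⁿ)ₙ, (μ₂ⁿ)ₙ are sequences of functions on [0,T] with μ₁^{n+1}(t) = k₁μ₂ⁿ(t) + c₁(t), μ₂^{n+1}(t) = k₂μ₁ⁿ(t) + c₂(t), and |μᵢ⁰(t) − μᵢ*(t)| ≤ ω for i = 1, 2 and all t ∈ [0,T]. Then max(|μ₁ⁿ(t) − μ₁*(t)|, |μ₂ⁿ(t) − μ₂*(t)|) ≤ ω·(max(k₁, k₂))ⁿ for all n and all t ∈ [0,T]; in particular μᵢⁿ converges to μᵢ* uniformly on [0,T] as n → ∞. -/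
/-- Theorem 4.2 (simultaneous policy iteration): the means of the iterated
policies converge uniformly on `[0,T]` to the Nash-equilibrium means, with
geometric rate `(max k₁ k₂)ⁿ`. -/
theorem stmt_9 (T k₁ k₂ ω : ℝ) (hT : 0 < T)
    (hk₁ : k₁ ∈ Set.Ioo (0 : ℝ) 1) (hk₂ : k₂ ∈ Set.Ioo (0 : ℝ) 1) (hω : 0 ≤ ω)
    (c₁ c₂ μ₁star μ₂star : ℝ → ℝ)
    (hfix₁ : ∀ t ∈ Set.Icc (0 : ℝ) T, μ₁star t = k₁ * μ₂star t + c₁ t)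
    (hfix₂ : ∀ t ∈ Set.Icc (0 : ℝ) T, μ₂star t = k₂ * μ₁star t + c₂ t)
    (μ₁ μ₂ : ℕ → ℝ → ℝ)
    (hrec₁ : ∀ n, ∀ t ∈ Set.Icc (0 : ℝ) T, μ₁ (n + 1) t = k₁ * μ₂ n t + c₁ t)
    (hrec₂ : ∀ n, ∀ t ∈ Set.Icc (0 : ℝ) T, μ₂ (n + 1) t = k₂ * μ₁ n t + c₂ t)
    (h0₁ : ∀ t ∈ Set.Icc (0 : ℝ) T, |μ₁ 0 t - μ₁star t| ≤ ω)
    (h0₂ : ∀ t ∈ Set.Icc (0 : ℝ) T, |μ₂ 0 t - μ₂star t| ≤ ω) :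
    (∀ n, ∀ t ∈ Set.Icc (0 : ℝ) T,
      max |μ₁ n t - μ₁star t| |μ₂ n t - μ₂star t| ≤ ω * (max k₁ k₂) ^ n) ∧
    TendstoUniformlyOn μ₁ μ₁star Filter.atTop (Set.Icc 0 T) ∧
    TendstoUniformlyOn μ₂ μ₂star Filter.atTop (Set.Icc 0 T) := by
  obtain ⟨hk₁0, hk₁1⟩ := hk₁
  obtain ⟨hk₂0, hk₂1⟩ := hk₂
  set q := max k₁ k₂ with hq
  have hq0 : 0 < q := lt_max_of_lt_left hk₁0
  have hq1 : q < 1 := max_lt hk₁1 hk₂1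
  have key : ∀ n, ∀ t ∈ Set.Icc (0 : ℝ) T,
      max |μ₁ n t - μ₁star t| |μ₂ n t - μ₂star t| ≤ ω * q ^ n := by
    intro n
    induction n with
    | zero => intro t ht; simpa using max_le (h0₁ t ht) (h0₂ t ht)
    | succ n ih =>
      intro t ht
      have hih := ih t ht
      have h1 : |μ₁ (n + 1) t - μ₁star t| ≤ ω * q ^ (n + 1) := by
        have : μ₁ (n + 1) t - μ₁star t = k₁ * (μ₂ n t - μ₂star t) := by
          rw [hrec₁ n t ht, hfix₁ t ht]; ring
        rw [this, abs_mul, abs_of_pos hk₁0]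
        calc k₁ * |μ₂ n t - μ₂star t| ≤ q * (ω * q ^ n) :=
              mul_le_mul (le_max_left _ _) (le_trans (le_max_right _ _) hih)
                (abs_nonneg _) hq0.le
          _ = ω * q ^ (n + 1) := by ring
      have h2 : |μ₂ (n + 1) t - μ₂star t| ≤ ω * q ^ (n + 1) := by
        have : μ₂ (n + 1) t - μ₂star t = k₂ * (μ₁ n t - μ₁star t) := by
          rw [hrec₂ n t ht, hfix₂ t ht]; ring
        rw [this, abs_mul, abs_of_pos hk₂0]
        calc k₂ * |μ₁ n t - μ₁star t| ≤ q * (ω * q ^ n) :=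
              mul_le_mul (le_max_right _ _) (le_trans (le_max_left _ _) hih)
                (abs_nonneg _) hq0.le
          _ = ω * q ^ (n + 1) := by ring
      exact max_le h1 h2
  have htend : Filter.Tendsto (fun n => ω * q ^ n) Filter.atTop (nhds 0) := by
    simpa using (tendsto_pow_atTop_nhds_zero_of_lt_one hq0.le hq1).const_mul ω
  refine ⟨key, ?_, ?_⟩
  · rw [Metric.tendstoUniformlyOn_iff]
    intro ε hε
    filter_upwards [htend.eventually (gt_mem_nhds hε)] with n hn t ht
    rw [Real.dist_eq, abs_sub_comm]
    exact lt_of_le_of_lt (le_trans (le_max_left _ _) (key n t ht)) hn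
  · rw [Metric.tendstoUniformlyOn_iff]
    intro ε hε
    filter_upwards [htend.eventually (gt_mem_nhds hε)] with n hn t ht
    rw [Real.dist_eq, abs_sub_comm]
    exact lt_of_le_of_lt (le_trans (le_max_right _ _) (key n t ht)) hn
end

section
/- Let h : [0,1] → ℝ be a concave continuous function with h(0) = h(1) = 0 that is absolutely continuous with a.e. derivative h′ ∈ L²((0,1)) not a.e. equal to zero, and write ‖h′‖₂ = (∫₀¹ h′(p)² dp)^{1/2}. Let m ∈ ℝ, s ≥ 0, and let Q : (0,1) → ℝ be square-integrable with ∫₀¹ Q(p) dp = m and ∫₀¹ (Q(p) − m)² dp = s². Then ∫₀¹ Q(1−p)·h′(p) dp ≤ s·‖h′‖₂. -/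
open MeasureTheory

/-!
Because `∫₀¹ h' = h 1 = 0`, the integrand `Q (1 - p)` may be replaced by its centred
version `Q (1 - p) - m`. Cauchy–Schwarz bounds the resulting integral by
`‖Q (1 - ·) - m‖₂ ‖h'‖₂`, and the reflection `p ↦ 1 - p` preserves Lebesgue measure on
`(0, 1)`, so `‖Q (1 - ·) - m‖₂ = s`.
-/

lemma measurePreserving_const_sub_restrict_Ioo (a b c : ℝ) :
    MeasurePreserving (fun x => c - x) (volume.restrict (Set.Ioo a b))
      (volume.restrict (Set.Ioo (c - b) (c - a))) := by
  simpa only [Set.preimage_const_sub_Ioo, sub_sub_cancel] using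
    (Measure.measurePreserving_sub_left volume c).restrict_preimage_emb
      (MeasurableEquiv.subLeft c).measurableEmbedding (Set.Ioo (c - b) (c - a))

section

variable {α : Type*} [MeasurableSpace α] {μ : Measure α}

lemma integral_mul_le_sqrt_integral_sq_mul_sqrt_integral_sq {f g : α → ℝ}
    (hf : MemLp f 2 μ) (hg : MemLp g 2 μ) :
    ∫ x, f x * g x ∂μ ≤ √(∫ x, f x ^ 2 ∂μ) * √(∫ x, g x ^ 2 ∂μ) := by
  have hf' : MemLp f (ENNReal.ofReal 2) μ := by simpa using hf
  have hg' : MemLp g (ENNReal.ofReal 2) μ := by simpa using hg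
  have norm_rpow_two (u : ℝ) : ‖u‖ ^ (2 : ℝ) = u ^ 2 := by
    rw [Real.rpow_two, Real.norm_eq_abs, sq_abs]
  calc ∫ x, f x * g x ∂μ ≤ ∫ x, ‖f x‖ * ‖g x‖ ∂μ := by
        simpa only [norm_mul] using
          (Real.le_norm_self _).trans (norm_integral_le_integral_norm fun x => f x * g x)
    _ ≤ (∫ x, ‖f x‖ ^ (2 : ℝ) ∂μ) ^ (1 / (2 : ℝ)) *
          (∫ x, ‖g x‖ ^ (2 : ℝ) ∂μ) ^ (1 / (2 : ℝ)) :=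
        integral_mul_norm_le_Lp_mul_Lq .two_two hf' hg'
    _ = √(∫ x, f x ^ 2 ∂μ) * √(∫ x, g x ^ 2 ∂μ) := by
        simp only [norm_rpow_two, Real.sqrt_eq_rpow]

lemma integral_mul_eq_integral_sub_const_mul {f φ : α → ℝ} (c : ℝ) (hφ : Integrable φ μ)
    (hφ_zero : ∫ x, φ x ∂μ = 0) (hfφ : Integrable (fun x => (f x - c) * φ x) μ) :
    ∫ x, f x * φ x ∂μ = ∫ x, (f x - c) * φ x ∂μ := by
  calc ∫ x, f x * φ x ∂μ = ∫ x, ((f x - c) * φ x + c * φ x) ∂μ := by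
        congr 1 with x; ring
    _ = ∫ x, (f x - c) * φ x ∂μ := by
        rw [integral_add hfφ (hφ.const_mul c), integral_const_mul, hφ_zero, mul_zero, add_zero]

end

theorem stmt_10_general (h h' : ℝ → ℝ)
    (h1 : h 1 = 0)
    (hAC : ∀ x ∈ Set.Icc (0 : ℝ) 1, h x = ∫ p in (0 : ℝ)..x, h' p)
    (hint : IntegrableOn h' (Set.Ioo 0 1))
    (hL2 : IntegrableOn (fun p => h' p ^ 2) (Set.Ioo 0 1))
    (m s : ℝ) (hs : 0 ≤ s) (Q : ℝ → ℝ)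
    (hQint : IntegrableOn Q (Set.Ioo 0 1))
    (hQsq : IntegrableOn (fun p => (Q p - m) ^ 2) (Set.Ioo 0 1))
    (hvar : ∫ p in Set.Ioo (0 : ℝ) 1, (Q p - m) ^ 2 = s ^ 2) :
    ∫ p in Set.Ioo (0 : ℝ) 1, Q (1 - p) * h' p ≤
      s * Real.sqrt (∫ p in Set.Ioo (0 : ℝ) 1, h' p ^ 2) := by
  have hreflect : MeasurePreserving (fun p : ℝ => 1 - p)
      (volume.restrict (Set.Ioo 0 1)) (volume.restrict (Set.Ioo 0 1)) := by
    simpa using measurePreserving_const_sub_restrict_Ioo 0 1 1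
  have hQ_L2 : MemLp (fun p => Q p - m) 2 (volume.restrict (Set.Ioo 0 1)) :=
    (memLp_two_iff_integrable_sq (hQint.sub (integrable_const m)).aestronglyMeasurable).2 hQsq
  have hQ_reflect_L2 : MemLp (fun p => Q (1 - p) - m) 2 (volume.restrict (Set.Ioo 0 1)) :=
    hQ_L2.comp_measurePreserving hreflect
  have hh'_L2 : MemLp h' 2 (volume.restrict (Set.Ioo 0 1)) :=
    (memLp_two_iff_integrable_sq hint.aestronglyMeasurable).2 hL2
  have hh'_zero : ∫ p in Set.Ioo (0 : ℝ) 1, h' p = 0 := by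
    rw [← integral_Ioc_eq_integral_Ioo, ← intervalIntegral.integral_of_le zero_le_one,
      ← hAC 1 (by simp), h1]
  calc ∫ p in Set.Ioo (0 : ℝ) 1, Q (1 - p) * h' p
      = ∫ p in Set.Ioo (0 : ℝ) 1, (Q (1 - p) - m) * h' p :=
        integral_mul_eq_integral_sub_const_mul m hint hh'_zero
          (hQ_reflect_L2.integrable_mul hh'_L2)
    _ ≤ √(∫ p in Set.Ioo (0 : ℝ) 1, (Q (1 - p) - m) ^ 2) *
          √(∫ p in Set.Ioo (0 : ℝ) 1, h' p ^ 2) :=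
        integral_mul_le_sqrt_integral_sq_mul_sqrt_integral_sq hQ_reflect_L2 hh'_L2
    _ = s * √(∫ p in Set.Ioo (0 : ℝ) 1, h' p ^ 2) := by
        rw [hreflect.integral_comp (MeasurableEquiv.subLeft 1).measurableEmbedding
          (fun p => (Q p - m) ^ 2), hvar, Real.sqrt_sq hs]

/-- Upper-bound half of Lemma 3.2: for any quantile function `Q` with mean `m`
and variance `s²`, `∫₀¹ Q(1−p)·h′(p) dp ≤ s·‖h′‖₂`. -/
theorem stmt_10 (h h' : ℝ → ℝ)
    (hconc : ConcaveOn ℝ (Set.Icc 0 1) h)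
    (hcont : ContinuousOn h (Set.Icc 0 1))
    (h0 : h 0 = 0) (h1 : h 1 = 0)
    (hAC : ∀ x ∈ Set.Icc (0 : ℝ) 1, h x = ∫ p in (0 : ℝ)..x, h' p)
    (hint : IntegrableOn h' (Set.Ioo 0 1))
    (hL2 : IntegrableOn (fun p => h' p ^ 2) (Set.Ioo 0 1))
    (hne : ¬ ∀ᵐ p ∂(volume.restrict (Set.Ioo (0 : ℝ) 1)), h' p = 0)
    (m s : ℝ) (hs : 0 ≤ s) (Q : ℝ → ℝ)
    (hQint : IntegrableOn Q (Set.Ioo 0 1))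
    (hQsq : IntegrableOn (fun p => (Q p - m) ^ 2) (Set.Ioo 0 1))
    (hmean : ∫ p in Set.Ioo (0 : ℝ) 1, Q p = m)
    (hvar : ∫ p in Set.Ioo (0 : ℝ) 1, (Q p - m) ^ 2 = s ^ 2) :
    ∫ p in Set.Ioo (0 : ℝ) 1, Q (1 - p) * h' p ≤
      s * Real.sqrt (∫ p in Set.Ioo (0 : ℝ) 1, h' p ^ 2) :=
  stmt_10_general h h' h1 hAC hint hL2 m s hs Q hQint hQsq hvar
end

section
/- Let h : [0,1] → ℝ be a concave continuous function with h(0) = h(1) = 0 that is absolutely continuous with a.e. derivative h′ ∈ L²((0,1)) not a.e. equal to zero, and write ‖h′‖₂ = (∫₀¹ h′(p)² dp)^{1/2}. Let m ∈ ℝ and s > 0, and define Q*(p) = m + s·h′(1−p)/‖h′‖₂ for p ∈ (0,1). Then: (i) Q* is (a.e. equal to) a nondecreasing function on (0,1); (ii) ∫₀¹ Q*(p) dp = m; (iii) ∫₀¹ (Q*(p) − m)² dp = s²; and (iv) ∫₀¹ Q*(1−p)·h′(p) dp = s·‖h′‖₂. -/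
/-!
`Q*` is an affine image of the reflected derivative `p ↦ h′(1 - p)`, and reflection preserves
Lebesgue measure on `(0,1)`, so (ii)–(iv) reduce to `∫₀¹ h′ = h(1) = 0` and `∫₀¹ h′² = ‖h′‖₂²`.
For (i), the Lebesgue differentiation theorem identifies `h′` a.e. with the right derivative of `h`,
which is antitone because `h` is concave.
-/

open MeasureTheory Set

theorem ConcaveOn.antitoneOn_rightDeriv {S : Set ℝ} {f : ℝ → ℝ} (hf : ConcaveOn ℝ S f) :
    AntitoneOn (fun x ↦ derivWithin f (Ioi x) x) (interior S) := fun x hx y hy hxy ↦ by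
  simpa only [derivWithin.neg, neg_le_neg_iff] using hf.neg.monotoneOn_rightDeriv hx hy hxy

theorem ConcaveOn.monotoneOn_rightDeriv_one_sub {f : ℝ → ℝ} (hf : ConcaveOn ℝ (Icc 0 1) f) :
    MonotoneOn (fun p ↦ derivWithin f (Ioi (1 - p)) (1 - p)) (Ioo 0 1) := by
  refine AntitoneOn.comp hf.antitoneOn_rightDeriv (fun p _ q _ hpq ↦ sub_le_sub_left hpq 1)
    fun p hp ↦ ?_
  rw [interior_Icc]
  exact ⟨sub_pos.2 hp.2, sub_lt_self 1 hp.1⟩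

theorem ae_hasDerivAt_of_eq_integral {f f' : ℝ → ℝ} {a b : ℝ}
    (hf' : IntervalIntegrable f' volume a b) (hf : ∀ x ∈ Icc a b, f x = ∫ t in a..x, f' t) :
    ∀ᵐ x, x ∈ Ioo a b → HasDerivAt f (f' x) x := by
  filter_upwards [hf'.ae_hasDerivAt_integral] with x hderiv hx
  have hab : a ≤ b := (hx.1.trans hx.2).le
  refine (hderiv (uIcc_of_le hab ▸ Ioo_subset_Icc_self hx) a left_mem_uIcc)
    |>.congr_of_eventuallyEq ?_
  filter_upwards [Ioo_mem_nhds hx.1 hx.2] with y hy using hf y (Ioo_subset_Icc_self hy)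

theorem ae_restrict_Ioo_eq_rightDeriv_of_eq_integral {f f' : ℝ → ℝ} {a b : ℝ}
    (hf' : IntervalIntegrable f' volume a b) (hf : ∀ x ∈ Icc a b, f x = ∫ t in a..x, f' t) :
    f' =ᵐ[volume.restrict (Ioo a b)] fun x ↦ derivWithin f (Ioi x) x := by
  filter_upwards [ae_restrict_of_ae (ae_hasDerivAt_of_eq_integral hf' hf),
    ae_restrict_mem measurableSet_Ioo] with x hderiv hx
  exact ((hderiv hx).hasDerivWithinAt.derivWithin (uniqueDiffWithinAt_Ioi x)).symm

theorem measurePreserving_one_sub_restrict_Ioo :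
    MeasurePreserving (fun p : ℝ ↦ 1 - p) (volume.restrict (Ioo 0 1))
      (volume.restrict (Ioo 0 1)) := by
  simpa [preimage_const_sub_Ioo] using
    (Measure.measurePreserving_sub_left volume (1 : ℝ)).restrict_preimage_emb
      (measurableEmbedding_subLeft 1) (Ioo 0 1)

theorem integral_comp_one_sub_Ioo (f : ℝ → ℝ) :
    ∫ p in Ioo (0 : ℝ) 1, f (1 - p) = ∫ p in Ioo (0 : ℝ) 1, f p :=
  measurePreserving_one_sub_restrict_Ioo.integral_comp (measurableEmbedding_subLeft 1) f

theorem integral_sq_pos_of_not_ae_eq_zero {α : Type*} [MeasurableSpace α] {μ : Measure α}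
    {f : α → ℝ} (hf : Integrable (fun x ↦ f x ^ 2) μ) (hne : ¬ ∀ᵐ x ∂μ, f x = 0) :
    0 < ∫ x, f x ^ 2 ∂μ := by
  refine (integral_nonneg fun x ↦ sq_nonneg (f x)).lt_of_ne fun hzero ↦ hne ?_
  filter_upwards [(integral_eq_zero_iff_of_nonneg (fun x ↦ sq_nonneg (f x)) hf).1 hzero.symm]
    with x hx using pow_eq_zero_iff two_ne_zero |>.1 hx

section QuantileMoments

variable {φ : ℝ → ℝ}

theorem integral_Ioo_const_add_mul_comp_one_sub (hφ : IntegrableOn φ (Ioo 0 1))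
    (hφ0 : ∫ p in Ioo (0 : ℝ) 1, φ p = 0) (m c : ℝ) :
    ∫ p in Ioo (0 : ℝ) 1, (m + c * φ (1 - p)) = m := by
  have hφr : IntegrableOn (fun p ↦ φ (1 - p)) (Ioo 0 1) :=
    (measurePreserving_one_sub_restrict_Ioo.integrable_comp_emb
      (measurableEmbedding_subLeft 1)).2 hφ
  rw [integral_add (integrable_const m) (hφr.const_mul c),
    integral_const_mul, integral_comp_one_sub_Ioo, hφ0]
  simp

theorem integral_Ioo_sq_mul_comp_one_sub (c : ℝ) :
    ∫ p in Ioo (0 : ℝ) 1, (c * φ (1 - p)) ^ 2 = c ^ 2 * ∫ p in Ioo (0 : ℝ) 1, φ p ^ 2 := by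
  simp_rw [mul_pow, integral_const_mul, integral_comp_one_sub_Ioo (fun p ↦ φ p ^ 2)]

theorem integral_Ioo_const_add_mul_mul (hφ : IntegrableOn φ (Ioo 0 1))
    (hφ2 : IntegrableOn (fun p ↦ φ p ^ 2) (Ioo 0 1)) (hφ0 : ∫ p in Ioo (0 : ℝ) 1, φ p = 0)
    (m c : ℝ) :
    ∫ p in Ioo (0 : ℝ) 1, (m + c * φ p) * φ p = c * ∫ p in Ioo (0 : ℝ) 1, φ p ^ 2 := by
  simp_rw [add_mul, mul_assoc, ← sq]
  rw [integral_add (hφ.const_mul m) (hφ2.const_mul c), integral_const_mul, integral_const_mul,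
    hφ0, mul_zero, zero_add]

end QuantileMoments

theorem stmt_11_general (h h' : ℝ → ℝ)
    (hconc : ConcaveOn ℝ (Set.Icc 0 1) h)
    (h1 : h 1 = 0)
    (hAC : ∀ x ∈ Set.Icc (0 : ℝ) 1, h x = ∫ p in (0 : ℝ)..x, h' p)
    (hint : IntegrableOn h' (Set.Ioo 0 1))
    (hL2 : IntegrableOn (fun p => h' p ^ 2) (Set.Ioo 0 1))
    (hne : ¬ ∀ᵐ p ∂(volume.restrict (Set.Ioo (0 : ℝ) 1)), h' p = 0)
    (m s : ℝ) (hs : 0 < s) :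
    let norm2 : ℝ := Real.sqrt (∫ p in Set.Ioo (0 : ℝ) 1, h' p ^ 2)
    let Qstar : ℝ → ℝ := fun p => m + s * h' (1 - p) / norm2
    (∃ g : ℝ → ℝ, MonotoneOn g (Set.Ioo 0 1) ∧
      ∀ᵐ p ∂(volume.restrict (Set.Ioo (0 : ℝ) 1)), Qstar p = g p) ∧
    (∫ p in Set.Ioo (0 : ℝ) 1, Qstar p = m) ∧
    (∫ p in Set.Ioo (0 : ℝ) 1, (Qstar p - m) ^ 2 = s ^ 2) ∧
    (∫ p in Set.Ioo (0 : ℝ) 1, Qstar (1 - p) * h' p = s * norm2) := by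
  intro norm2 Qstar
  have hQ : Qstar = fun p ↦ m + s / norm2 * h' (1 - p) := by
    funext p; simp only [Qstar]; ring
  have hmean0 : ∫ p in Ioo (0 : ℝ) 1, h' p = 0 := by
    rw [← integral_Ioc_eq_integral_Ioo, ← intervalIntegral.integral_of_le zero_le_one,
      ← hAC 1 ⟨zero_le_one, le_rfl⟩, h1]
  have hnorm2_sq : norm2 ^ 2 = ∫ p in Ioo (0 : ℝ) 1, h' p ^ 2 :=
    Real.sq_sqrt (integral_sq_pos_of_not_ae_eq_zero hL2 hne).le
  have hnorm2 : 0 < norm2 := Real.sqrt_pos.2 (integral_sq_pos_of_not_ae_eq_zero hL2 hne)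
  refine ⟨⟨fun p ↦ m + s / norm2 * derivWithin h (Ioi (1 - p)) (1 - p), ?_, ?_⟩, ?_, ?_, ?_⟩
  · exact fun p hp q hq hpq ↦ add_le_add_right (mul_le_mul_of_nonneg_left
      (hconc.monotoneOn_rightDeriv_one_sub hp hq hpq) (div_pos hs hnorm2).le) m
  · have hII : IntervalIntegrable h' volume 0 1 :=
      (intervalIntegrable_iff_integrableOn_Ioo_of_le zero_le_one).2 hint
    filter_upwards [measurePreserving_one_sub_restrict_Ioo.quasiMeasurePreserving.ae
      (ae_restrict_Ioo_eq_rightDeriv_of_eq_integral hII hAC)] with p hp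
    simp only [hQ, hp]
  · rw [hQ, integral_Ioo_const_add_mul_comp_one_sub hint hmean0]
  · simp_rw [hQ, add_sub_cancel_left, integral_Ioo_sq_mul_comp_one_sub, ← hnorm2_sq]
    field_simp
  · simp_rw [hQ, sub_sub_cancel, integral_Ioo_const_add_mul_mul hint hL2 hmean0, ← hnorm2_sq]
    field_simp

/-- Attainment half of Lemma 3.2: the quantile function
`Q*(p) = m + s·h′(1−p)/‖h′‖₂` is (a.e.) nondecreasing on `(0,1)`, has mean `m`,
variance `s²`, and achieves the maximal Choquet regularizer value `s·‖h′‖₂`. -/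
theorem stmt_11 (h h' : ℝ → ℝ)
    (hconc : ConcaveOn ℝ (Set.Icc 0 1) h)
    (hcont : ContinuousOn h (Set.Icc 0 1))
    (h0 : h 0 = 0) (h1 : h 1 = 0)
    (hAC : ∀ x ∈ Set.Icc (0 : ℝ) 1, h x = ∫ p in (0 : ℝ)..x, h' p)
    (hint : IntegrableOn h' (Set.Ioo 0 1))
    (hL2 : IntegrableOn (fun p => h' p ^ 2) (Set.Ioo 0 1))
    (hne : ¬ ∀ᵐ p ∂(volume.restrict (Set.Ioo (0 : ℝ) 1)), h' p = 0)
    (m s : ℝ) (hs : 0 < s) :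
    let norm2 : ℝ := Real.sqrt (∫ p in Set.Ioo (0 : ℝ) 1, h' p ^ 2)
    let Qstar : ℝ → ℝ := fun p => m + s * h' (1 - p) / norm2
    (∃ g : ℝ → ℝ, MonotoneOn g (Set.Ioo 0 1) ∧
      ∀ᵐ p ∂(volume.restrict (Set.Ioo (0 : ℝ) 1)), Qstar p = g p) ∧
    (∫ p in Set.Ioo (0 : ℝ) 1, Qstar p = m) ∧
    (∫ p in Set.Ioo (0 : ℝ) 1, (Qstar p - m) ^ 2 = s ^ 2) ∧
    (∫ p in Set.Ioo (0 : ℝ) 1, Qstar (1 - p) * h' p = s * norm2) :=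
  stmt_11_general h h' hconc h1 hAC hint hL2 hne m s hs
end

section
/- Let μ be a Borel probability measure on ℝ with bounded support, and let h : [0,1] → ℝ be absolutely continuous with h(0) = h(1) = 0 and a.e. derivative h′ ∈ L¹((0,1)). Let Q_μ(p) = inf{x ∈ ℝ : μ((−∞, x]) ≥ p} denote the left-quantile function of μ. Then ∫_ℝ h( μ([x,∞)) ) dx = ∫₀¹ Q_μ(1−p)·h′(p) dp. -/
open MeasureTheory Set Filter ProbabilityTheory

/-!
Write `S x = μ([x, ∞))` and `Q = Q_μ`. Outside the support `[a, b]` of `μ`, `S` only takes the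
values `0` and `1`, where `h` vanishes. By absolute continuity `h (S x) = ∫₀¹ 1{p < S x} h'(p) dp`,
so Fubini turns `∫ₐᵇ h (S x) dx` into `∫₀¹ |{x ∈ (a, b] | p < S x}| h'(p) dp`. For `0 < p < 1`
the superlevel set `{x | p < S x}` lies between `(-∞, Q(1-p))` and `(-∞, Q(1-p)]`, so this length
is `Q(1-p) - a`, and the constant `a` integrates to `a (h 1 - h 0) = 0`.
-/

section LayerCake

theorem intervalIntegral_eq_setIntegral_Ioo_indicator_Iio {E : Type*} [NormedAddCommGroup E]
    [NormedSpace ℝ E] (f : ℝ → E) {a b s : ℝ} (hs : s ∈ Icc a b) :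
    ∫ p in a..s, f p = ∫ p in Ioo a b, (Iio s).indicator f p := by
  rw [intervalIntegral.integral_of_le hs.1, integral_Ioc_eq_integral_Ioo,
    setIntegral_indicator measurableSet_Iio, Ioo_inter_Iio, min_eq_right hs.2]

variable {X : Type*} [MeasurableSpace X] {ν : Measure X} [IsFiniteMeasure ν] {S : X → ℝ}

theorem integrable_measureReal_setOf_lt_mul {ρ : Measure ℝ} {f : ℝ → ℝ} (hf : Integrable f ρ) :
    Integrable (fun p => ν.real {x | p < S x} * f p) ρ := by
  have hanti : Antitone fun p => ν.real {x | p < S x} := fun p q hpq =>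
    measureReal_mono fun x (hx : q < S x) => hpq.trans_lt hx
  refine hf.bdd_mul hanti.measurable.aestronglyMeasurable (c := ν.real univ)
    (Eventually.of_forall fun p => ?_)
  rw [Real.norm_of_nonneg measureReal_nonneg]
  exact measureReal_mono (subset_univ _)

theorem integral_intervalIntegral_eq_integral_measureReal_setOf_lt_mul (hS : Measurable S)
    (hS01 : ∀ x, S x ∈ Icc 0 1) {f : ℝ → ℝ} (hf : IntegrableOn f (Ioo 0 1)) :
    ∫ x, (∫ p in 0..S x, f p) ∂ν = ∫ p in Ioo 0 1, ν.real {x | p < S x} * f p := by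
  have hE : MeasurableSet {z : X × ℝ | z.2 < S z.1} :=
    measurableSet_lt measurable_snd (hS.comp measurable_fst)
  have hprod : Integrable (Function.uncurry fun x p => (Iio (S x)).indicator f p)
      (ν.prod (volume.restrict (Ioo 0 1))) :=
    ((hf.comp_snd ν).indicator hE).congr (Eventually.of_forall fun z => rfl)
  calc ∫ x, (∫ p in 0..S x, f p) ∂ν
      = ∫ x, (∫ p in Ioo 0 1, (Iio (S x)).indicator f p) ∂ν := by
        simp_rw [intervalIntegral_eq_setIntegral_Ioo_indicator_Iio f (hS01 _)]
    _ = ∫ p in Ioo 0 1, ∫ x, (Iio (S x)).indicator f p ∂ν := integral_integral_swap hprod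
    _ = ∫ p in Ioo 0 1, ν.real {x | p < S x} * f p := by
        congr 1 with p
        rw [← smul_eq_mul, ← integral_indicator_const _ (measurableSet_lt measurable_const hS)]
        rfl

end LayerCake

noncomputable def leftQuantile (μ : Measure ℝ) (q : ℝ) : ℝ :=
  sInf {x | q ≤ μ.real (Iic x)}

section Quantile

variable {μ : Measure ℝ} [IsProbabilityMeasure μ] {a b q x : ℝ}

theorem bddBelow_setOf_le_measureReal_Iic (hq : 0 < q) : BddBelow {x | q ≤ μ.real (Iic x)} := by
  obtain ⟨M, hM⟩ := eventually_atBot.1 ((tendsto_cdf_atBot μ).eventually (gt_mem_nhds hq))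
  refine ⟨M, fun x (hx : q ≤ μ.real (Iic x)) => not_lt.1 fun hxM => ?_⟩
  exact (hM x hxM.le).not_ge (cdf_eq_real μ x ▸ hx)

theorem nonempty_setOf_le_measureReal_Iic (hq : q < 1) : {x | q ≤ μ.real (Iic x)}.Nonempty := by
  obtain ⟨M, hM⟩ := eventually_atTop.1 ((tendsto_cdf_atTop μ).eventually (lt_mem_nhds hq))
  exact ⟨M, show q ≤ μ.real (Iic M) from cdf_eq_real μ M ▸ (hM M le_rfl).le⟩

theorem measureReal_Ioi_eq_one_sub (x : ℝ) : μ.real (Ioi x) = 1 - μ.real (Iic x) := by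
  rw [← compl_Iic, probReal_compl_eq_one_sub measurableSet_Iic]

theorem lt_measureReal_Ici_of_lt_leftQuantile (hq : 0 < q) (hx : x < leftQuantile μ q) :
    1 - q < μ.real (Ici x) := by
  have hFx : μ.real (Iic x) < q :=
    not_le.1 (notMem_of_lt_csInf (s := {x | q ≤ μ.real (Iic x)}) hx
      (bddBelow_setOf_le_measureReal_Iic hq))
  calc 1 - q < μ.real (Ioi x) := by rw [measureReal_Ioi_eq_one_sub]; linarith
    _ ≤ μ.real (Ici x) := measureReal_mono Ioi_subset_Ici_self

theorem measureReal_Ici_le_of_leftQuantile_lt (hq : q < 1) (hx : leftQuantile μ q < x) :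
    μ.real (Ici x) ≤ 1 - q := by
  obtain ⟨y, hy, hyx⟩ := exists_lt_of_csInf_lt (nonempty_setOf_le_measureReal_Iic hq) hx
  calc μ.real (Ici x) ≤ μ.real (Ioi y) := measureReal_mono (Ici_subset_Ioi.2 hyx)
    _ = 1 - μ.real (Iic y) := measureReal_Ioi_eq_one_sub y
    _ ≤ 1 - q := by linarith [show q ≤ μ.real (Iic y) from hy]

theorem volume_setOf_lt_measureReal_Ici_inter_Ioc {p : ℝ} (hp : p ∈ Ioo 0 1)
    (hb : leftQuantile μ (1 - p) ≤ b) :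
    volume ({x | p < μ.real (Ici x)} ∩ Ioc a b) =
      ENNReal.ofReal (leftQuantile μ (1 - p) - a) := by
  refine le_antisymm (Real.volume_Ioc ▸ measure_mono fun x ⟨hpx, hx⟩ => ⟨hx.1, ?_⟩)
    (Real.volume_Ioo ▸ measure_mono fun x hx => ⟨?_, hx.1, hx.2.le.trans hb⟩)
  · by_contra! hQx
    have := measureReal_Ici_le_of_leftQuantile_lt (by linarith [hp.1]) hQx
    exact (show p < μ.real (Ici x) from hpx).not_ge (by linarith)
  · simpa using lt_measureReal_Ici_of_lt_leftQuantile (by linarith [hp.2]) hx.2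

theorem measureReal_eq_zero_of_disjoint_Icc {s : Set ℝ} (hμ : μ (Icc a b)ᶜ = 0)
    (hs : Disjoint s (Icc a b)) : μ.real s = 0 :=
  (measureReal_eq_zero_iff).2 (measure_mono_null (subset_compl_iff_disjoint_right.2 hs) hμ)

theorem measureReal_Ici_of_le (hμ : μ (Icc a b)ᶜ = 0) (hx : x ≤ a) : μ.real (Ici x) = 1 := by
  have hnull : μ.real (Iio x) = 0 := measureReal_eq_zero_of_disjoint_Icc hμ
    (disjoint_left.2 fun y hy hy' => hy'.1.not_gt (hx.trans_lt' hy))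
  rw [← compl_Iio, probReal_compl_eq_one_sub measurableSet_Iio, hnull, sub_zero]

theorem measureReal_Ici_of_lt (hμ : μ (Icc a b)ᶜ = 0) (hx : b < x) : μ.real (Ici x) = 0 :=
  measureReal_eq_zero_of_disjoint_Icc hμ
    (disjoint_left.2 fun _ hy hy' => hy'.2.not_gt (hx.trans_le hy))

theorem leftQuantile_mem_Icc (hμ : μ (Icc a b)ᶜ = 0) (hq : q ∈ Ioc 0 1) :
    leftQuantile μ q ∈ Icc a b := by
  have hb : b ∈ {x | q ≤ μ.real (Iic x)} := by
    have : μ.real (Ioi b) = 0 :=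
      measureReal_eq_zero_of_disjoint_Icc hμ (disjoint_left.2 fun _ hy hy' => hy'.2.not_gt hy)
    show q ≤ μ.real (Iic b)
    linarith [measureReal_Ioi_eq_one_sub (μ := μ) b, hq.2]
  refine ⟨le_csInf ⟨b, hb⟩ fun x (hx : q ≤ μ.real (Iic x)) => not_lt.1 fun hxa => ?_,
    csInf_le (bddBelow_setOf_le_measureReal_Iic hq.1) hb⟩
  have : μ.real (Iic x) = 0 := measureReal_eq_zero_of_disjoint_Icc hμ
    (disjoint_left.2 fun y hy hy' => hy'.1.not_gt (hxa.trans_le' hy))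
  linarith [hq.1]

theorem measureReal_restrict_Ioc_setOf_lt_measureReal_Ici (hμ : μ (Icc a b)ᶜ = 0) {p : ℝ}
    (hp : p ∈ Ioo 0 1) :
    (volume.restrict (Ioc a b)).real {x | p < μ.real (Ici x)} = leftQuantile μ (1 - p) - a := by
  have hQ : leftQuantile μ (1 - p) ∈ Icc a b :=
    leftQuantile_mem_Icc hμ ⟨by linarith [hp.2], by linarith [hp.1]⟩
  rw [measureReal_def, Measure.restrict_apply' measurableSet_Ioc,
    volume_setOf_lt_measureReal_Ici_inter_Ioc hp hQ.2, ENNReal.toReal_ofReal (by linarith [hQ.1])]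

theorem measureReal_Ici_eq_zero_or_one (hμ : μ (Icc a b)ᶜ = 0) (hx : x ∉ Ioc a b) :
    μ.real (Ici x) = 0 ∨ μ.real (Ici x) = 1 := by
  rcases le_or_gt x a with hxa | hax
  · exact .inr (measureReal_Ici_of_le hμ hxa)
  · exact .inl (measureReal_Ici_of_lt hμ (lt_of_not_ge fun hxb => hx ⟨hax, hxb⟩))

end Quantile

/-- Quantile representation of the Choquet regularizer:
`∫_ℝ h(μ([x,∞))) dx = ∫₀¹ Q_μ(1−p)·h′(p) dp` for a boundedly supported
probability measure `μ` and an absolutely continuous distortion `h` with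
`h(0) = h(1) = 0`. -/
theorem stmt_15 (μ : Measure ℝ) [IsProbabilityMeasure μ]
    (hμ : ∃ K : Set ℝ, Bornology.IsBounded K ∧ μ Kᶜ = 0)
    (h h' : ℝ → ℝ)
    (h0 : h 0 = 0) (h1 : h 1 = 0)
    (hint : IntegrableOn h' (Set.Ioo 0 1))
    (hAC : ∀ x ∈ Set.Icc (0 : ℝ) 1, h x = ∫ p in (0 : ℝ)..x, h' p) :
    let Qμ : ℝ → ℝ := fun p => sInf {x : ℝ | p ≤ (μ (Set.Iic x)).toReal}
    ∫ x : ℝ, h ((μ (Set.Ici x)).toReal) =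
      ∫ p in Set.Ioo (0 : ℝ) 1, Qμ (1 - p) * h' p := by
  intro Qμ
  obtain ⟨a, b, hsupp⟩ : ∃ a b, μ (Icc a b)ᶜ = 0 := by
    obtain ⟨K, hK, hK0⟩ := hμ
    exact ⟨_, _, measure_mono_null (compl_subset_compl.2 hK.subset_Icc_sInf_sSup) hK0⟩
  set S : ℝ → ℝ := fun x => μ.real (Ici x)
  have hS : Measurable S :=
    Antitone.measurable fun x y hxy => measureReal_mono (Ici_subset_Ici.2 hxy)
  have hS01 : ∀ x, S x ∈ Icc 0 1 := fun x => ⟨measureReal_nonneg, measureReal_le_one⟩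
  have hvanish : ∀ x ∉ Ioc a b, h (S x) = 0 := fun x hx => by
    rcases measureReal_Ici_eq_zero_or_one hsupp hx with hSx | hSx <;> simp [S, hSx, h0, h1]
  have hlen : ∀ p ∈ Ioo (0 : ℝ) 1,
      (volume.restrict (Ioc a b)).real {x | p < S x} * h' p = (Qμ (1 - p) - a) * h' p :=
    fun p hp => by rw [measureReal_restrict_Ioc_setOf_lt_measureReal_Ici hsupp hp]; rfl
  have hlen_int : IntegrableOn (fun p => (Qμ (1 - p) - a) * h' p) (Ioo 0 1) :=
    (integrable_measureReal_setOf_lt_mul hint).congr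
      ((ae_restrict_iff' measurableSet_Ioo).2 (Eventually.of_forall hlen))
  have hmean : ∫ p in Ioo (0 : ℝ) 1, h' p = 0 := by
    rw [← integral_Ioc_eq_integral_Ioo, ← intervalIntegral.integral_of_le zero_le_one,
      ← hAC 1 (right_mem_Icc.2 zero_le_one), h1]
  calc ∫ x, h (S x)
      = ∫ x in Ioc a b, h (S x) := (setIntegral_eq_integral_of_forall_compl_eq_zero hvanish).symm
    _ = ∫ x in Ioc a b, ∫ p in 0..S x, h' p :=
        setIntegral_congr_fun measurableSet_Ioc fun x _ => hAC _ (hS01 x)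
    _ = ∫ p in Ioo 0 1, (volume.restrict (Ioc a b)).real {x | p < S x} * h' p :=
        integral_intervalIntegral_eq_integral_measureReal_setOf_lt_mul hS hS01 hint
    _ = ∫ p in Ioo 0 1, (Qμ (1 - p) - a) * h' p := setIntegral_congr_fun measurableSet_Ioo hlen
    _ = ∫ p in Ioo 0 1, ((Qμ (1 - p) - a) * h' p + a * h' p) := by
        rw [integral_add hlen_int (hint.const_mul a), integral_const_mul, hmean, mul_zero, add_zero]
    _ = ∫ p in Ioo 0 1, Qμ (1 - p) * h' p := by congr 1 with p; ring
end

section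
/- Let T > 0, γ > 0, ι ≥ 0, and ρ, v ≥ 0 with κ := ι + ρv > 0. Define a₂(t) = (1/(γκ))·(1 − e^{−2κ(T−t)}). Let a₂⁰ : [0,T] → ℝ be continuous and, for each n ≥ 0, let a₂^{n+1} : [0,T] → ℝ be differentiable with (a₂^{n+1})′(t) = 2ι·a₂^{n+1}(t) + 2ρv·a₂ⁿ(t) − 2/γ for all t ∈ [0,T] and a₂^{n+1}(T) = 0. Then a₂ⁿ converges to a₂ uniformly on [0,T]; moreover sup_{t∈[0,T]} |a₂ⁿ(t) − a₂(t)| ≤ (2ρvT)ⁿ/n! · sup_{t∈[0,T]} |a₂⁰(t) − a₂(t)|. -/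
/-!
The errors `eₙ = a₂ⁿ - a₂` satisfy `eₙ₊₁' = 2ι eₙ₊₁ + 2ρv eₙ` with `eₙ₊₁(T) = 0`, because `a₂`
is a fixed point of the iteration. Integrating against the factor `exp (-2ι (s - t)) ≤ 1` gives
`|eₙ₊₁(t)| ≤ 2ρv ∫ₜᵀ |eₙ|`, and iterating this Picard-type estimate from `|e₀| ≤ sup |e₀|` yields
`|eₙ(t)| ≤ sup |e₀| · (2ρv)ⁿ (T - t)ⁿ / n!`.
-/

open Set Filter Topology Real Nat MeasureTheory

lemma integral_sub_pow (t T : ℝ) (n : ℕ) :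
    ∫ s in t..T, (T - s) ^ n = (T - t) ^ (n + 1) / (n + 1) := by
  simp [intervalIntegral.integral_comp_sub_left (fun u => u ^ n) T, integral_pow]

lemma Metric.tendstoUniformlyOn_of_dist_le {ι α β : Type*} [PseudoMetricSpace β] {p : Filter ι}
    {F : ι → α → β} {f : α → β} {s : Set α} {u : ι → ℝ} (hu : Tendsto u p (𝓝 0))
    (h : ∀ n, ∀ x ∈ s, dist (f x) (F n x) ≤ u n) : TendstoUniformlyOn F f p s := by
  rw [Metric.tendstoUniformlyOn_iff]
  intro ε hε
  filter_upwards [hu.eventually (gt_mem_nhds hε)] with n hn x hx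
  exact (h n x hx).trans_lt hn

lemma abs_le_integral_of_hasDerivAt_of_eq_zero {lam t T : ℝ} {e g G : ℝ → ℝ}
    (hlam : 0 ≤ lam) (htT : t ≤ T)
    (he : ∀ s ∈ Icc t T, HasDerivAt e (lam * e s + g s) s) (heT : e T = 0)
    (hg : IntervalIntegrable g volume t T)
    (hG : IntervalIntegrable G volume t T)
    (hgG : ∀ s ∈ Icc t T, |g s| ≤ G s) :
    |e t| ≤ ∫ s in t..T, G s := by
  set w : ℝ → ℝ := fun s => exp (-lam * (s - t))
  have hw : ∀ s, HasDerivAt w (-lam * w s) s := fun s => by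
    simpa [w, mul_comm] using (((hasDerivAt_id s).sub_const t).const_mul (-lam)).exp
  have hwe : ∀ s ∈ uIcc t T, HasDerivAt (fun s => w s * e s) (w s * g s) s := fun s hs => by
    rw [uIcc_of_le htT] at hs
    exact ((hw s).mul (he s hs)).congr_deriv (by ring)
  have hwg : IntervalIntegrable (fun s => w s * g s) volume t T :=
    hg.continuousOn_mul (by fun_prop)
  have hFTC := intervalIntegral.integral_eq_sub_of_hasDerivAt hwe hwg
  simp only [heT, mul_zero, w, sub_self, exp_zero, one_mul, zero_sub] at hFTC
  rw [← abs_neg, ← hFTC, ← Real.norm_eq_abs]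
  refine intervalIntegral.norm_integral_le_of_norm_le htT (.of_forall fun s hs => ?_) hG
  have hw1 : w s ≤ 1 := exp_le_one_iff.2 (by nlinarith [hs.1])
  calc ‖w s * g s‖ = w s * |g s| := by rw [norm_mul, norm_of_nonneg (exp_pos _).le, norm_eq_abs]
    _ ≤ 1 * |g s| := by gcongr
    _ ≤ G s := by rw [one_mul]; exact hgG s (Ioc_subset_Icc_self hs)

lemma abs_le_mul_pow_div_factorial_of_hasDerivAt {lam c a T M : ℝ} {e : ℕ → ℝ → ℝ}
    (hlam : 0 ≤ lam) (hc : 0 ≤ c) (he0 : ContinuousOn (e 0) (Icc a T))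
    (hM : ∀ s ∈ Icc a T, |e 0 s| ≤ M)
    (he : ∀ n, ∀ s ∈ Icc a T, HasDerivAt (e (n + 1)) (lam * e (n + 1) s + c * e n s) s)
    (heT : ∀ n, e (n + 1) T = 0) (n : ℕ) :
    ∀ t ∈ Icc a T, |e n t| ≤ M * c ^ n * (T - t) ^ n / n ! := by
  have hcont : ∀ n, ContinuousOn (e n) (Icc a T)
    | 0 => he0
    | n + 1 => fun s hs => (he n s hs).continuousAt.continuousWithinAt
  induction n with
  | zero => simpa using hM
  | succ n ih =>
    intro t ht
    have hsub : Icc t T ⊆ Icc a T := Icc_subset_Icc_left ht.1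
    have hint : IntervalIntegrable (fun s => c * e n s) volume t T :=
      (((hcont n).mono hsub).const_smul c).intervalIntegrable_of_Icc ht.2
    calc |e (n + 1) t|
        ≤ ∫ s in t..T, c * (M * c ^ n * (T - s) ^ n / n !) :=
          abs_le_integral_of_hasDerivAt_of_eq_zero hlam ht.2 (fun s hs => he n s (hsub hs))
            (heT n) hint (Continuous.intervalIntegrable (by fun_prop) _ _) fun s hs => by
              rw [abs_mul, abs_of_nonneg hc]
              exact mul_le_mul_of_nonneg_left (ih s (hsub hs)) hc
      _ = M * c ^ (n + 1) * (T - t) ^ (n + 1) / (n + 1)! := by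
          simp only [mul_div_assoc, intervalIntegral.integral_const_mul,
            intervalIntegral.integral_div, integral_sub_pow, Nat.factorial_succ]
          push_cast
          field_simp
          ring

lemma hasDerivAt_div_mul_one_sub_exp {γ κ T : ℝ} (hκ : κ ≠ 0) (t : ℝ) :
    HasDerivAt (fun s => 1 / (γ * κ) * (1 - exp (-2 * κ * (T - s))))
      (2 * κ * (1 / (γ * κ) * (1 - exp (-2 * κ * (T - t)))) - 2 / γ) t := by
  have hlin : HasDerivAt (fun s => -2 * κ * (T - s)) (2 * κ) t :=
    (((hasDerivAt_id t).const_sub T).const_mul (-2 * κ)).congr_deriv (by ring)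
  refine ((hasDerivAt_const t 1).sub hlin.exp).const_mul _ |>.congr_deriv ?_
  field_simp
  ring

theorem stmt_16_general (T γ ι ρ v : ℝ) (hι : 0 ≤ ι)
    (hρ : 0 ≤ ρ) (hv : 0 ≤ v) (hκ : 0 < ι + ρ * v)
    (a₂seq : ℕ → ℝ → ℝ)
    (hcont : ContinuousOn (a₂seq 0) (Set.Icc 0 T))
    (hode : ∀ n, ∀ t ∈ Set.Icc (0 : ℝ) T,
      HasDerivAt (a₂seq (n + 1))
        (2 * ι * a₂seq (n + 1) t + 2 * ρ * v * a₂seq n t - 2 / γ) t)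
    (hterm : ∀ n, a₂seq (n + 1) T = 0) :
    let κ : ℝ := ι + ρ * v
    let a₂ : ℝ → ℝ := fun t => (1 / (γ * κ)) * (1 - Real.exp (-2 * κ * (T - t)))
    TendstoUniformlyOn a₂seq a₂ Filter.atTop (Set.Icc 0 T) ∧
    ∀ n, ∀ t ∈ Set.Icc (0 : ℝ) T,
      |a₂seq n t - a₂ t| ≤ (2 * ρ * v * T) ^ n / (n.factorial : ℝ) *
        sSup ((fun t => |a₂seq 0 t - a₂ t|) '' Set.Icc 0 T) := by
  intro κ a₂
  have ha₂ (t : ℝ) : HasDerivAt a₂ (2 * ι * a₂ t + 2 * ρ * v * a₂ t - 2 / γ) t :=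
    (hasDerivAt_div_mul_one_sub_exp hκ.ne' t).congr_deriv (by ring)
  have herr (n : ℕ) (t : ℝ) (ht : t ∈ Icc 0 T) :
      HasDerivAt (fun s => a₂seq (n + 1) s - a₂ s)
        (2 * ι * (a₂seq (n + 1) t - a₂ t) + 2 * ρ * v * (a₂seq n t - a₂ t)) t :=
    ((hode n t ht).sub (ha₂ t)).congr_deriv (by ring)
  have herr0 : ContinuousOn (fun s => a₂seq 0 s - a₂ s) (Icc 0 T) := hcont.sub (by fun_prop)
  set M := sSup ((fun t => |a₂seq 0 t - a₂ t|) '' Set.Icc 0 T)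
  have hM (s : ℝ) (hs : s ∈ Icc 0 T) : |a₂seq 0 s - a₂ s| ≤ M :=
    le_csSup (isCompact_Icc.bddAbove_image herr0.abs) (mem_image_of_mem _ hs)
  have hbound (n : ℕ) (t : ℝ) (ht : t ∈ Icc 0 T) :
      |a₂seq n t - a₂ t| ≤ (2 * ρ * v * T) ^ n / (n ! : ℝ) * M := by
    have hM0 := (abs_nonneg _).trans (hM t ht)
    have hc : 0 ≤ 2 * ρ * v := by positivity
    calc |a₂seq n t - a₂ t|
        ≤ M * (2 * ρ * v) ^ n * (T - t) ^ n / n ! :=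
          abs_le_mul_pow_div_factorial_of_hasDerivAt (e := fun n s => a₂seq n s - a₂ s)
            (by positivity) hc herr0 hM herr (by simp [hterm, a₂]) n t ht
      _ ≤ M * (2 * ρ * v) ^ n * T ^ n / n ! := by
          gcongr
          · exact sub_nonneg.2 ht.2
          · linarith [ht.1]
      _ = _ := by ring
  have hrate : Tendsto (fun n : ℕ => (2 * ρ * v * T) ^ n / (n ! : ℝ) * M) atTop (𝓝 0) := by
    simpa using (FloorSemiring.tendsto_pow_div_factorial_atTop (2 * ρ * v * T)).mul_const M
  refine ⟨Metric.tendstoUniformlyOn_of_dist_le hrate fun n t ht => ?_, hbound⟩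
  rw [Real.dist_eq, abs_sub_comm]
  exact hbound n t ht

/-- Theorem 4.1(ii), second-order coefficient: the policy-iteration coefficients
`a₂ⁿ` converge uniformly on `[0,T]` to the equilibrium coefficient `a₂`, with
factorial rate `(2ρvT)ⁿ/n!` times the sup of the initial error. -/
theorem stmt_16 (T γ ι ρ v : ℝ) (hT : 0 < T) (hγ : 0 < γ) (hι : 0 ≤ ι)
    (hρ : 0 ≤ ρ) (hv : 0 ≤ v) (hκ : 0 < ι + ρ * v)
    (a₂seq : ℕ → ℝ → ℝ)
    (hcont : ContinuousOn (a₂seq 0) (Set.Icc 0 T))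
    (hode : ∀ n, ∀ t ∈ Set.Icc (0 : ℝ) T,
      HasDerivAt (a₂seq (n + 1))
        (2 * ι * a₂seq (n + 1) t + 2 * ρ * v * a₂seq n t - 2 / γ) t)
    (hterm : ∀ n, a₂seq (n + 1) T = 0) :
    let κ : ℝ := ι + ρ * v
    let a₂ : ℝ → ℝ := fun t => (1 / (γ * κ)) * (1 - Real.exp (-2 * κ * (T - t)))
    TendstoUniformlyOn a₂seq a₂ Filter.atTop (Set.Icc 0 T) ∧
    ∀ n, ∀ t ∈ Set.Icc (0 : ℝ) T,
      |a₂seq n t - a₂ t| ≤ (2 * ρ * v * T) ^ n / (n.factorial : ℝ) *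
        sSup ((fun t => |a₂seq 0 t - a₂ t|) '' Set.Icc 0 T) :=
  stmt_16_general T γ ι ρ v hι hρ hv hκ a₂seq hcont hode hterm
end
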